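/- A temporal graph G = (V, E, α, β) is zero-acyclic if and only if there exists a half-extend-respecting ordering of its temporal edges, i.e., a linear order on E such that whenever edge f half-extends edge e, e precedes f in the order. -/

import Mathlib

open Relation

section aux
variable {ε : Type*}

lemma aux_all_eq (f : ε → ℝ) :
    ∀ (l : List ε) (a : ε), List.Chain (fun x y => f x ≤ f y) a l →
      f ((a :: l).getLast (by simp)) ≤ f a → ∀ x ∈ a :: l, f x = f a := by
  intro l
  induction l with
  | nil => intro a _ _ x hx; simp at hx; subst hx; rfl
  | cons b l ih =>
    intro a hchain hlast x hx
    simp only [List.Chain, List.chain_cons] at hchain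
    obtain ⟨hab, hchain⟩ := hchain
    have hlast' : ((a :: b :: l).getLast (by simp)) = ((b :: l).getLast (by simp)) :=
      List.getLast_cons (by simp)
    rw [hlast'] at hlast
    have h2 := ih b hchain (le_trans hlast hab)
    have hlam : f ((b :: l).getLast (by simp)) = f b :=
      h2 _ (List.getLast_mem (by simp))
    have hba : f b = f a := le_antisymm (hlam ▸ hlast) hab
    rcases List.mem_cons.mp hx with rfl | hx
    · rfl
    · rw [h2 x hx, hba]

lemma aux_succ (R : ε → ε → Prop) :
    ∀ (l : List ε) (a c : ε), List.Chain R a l → R ((a :: l).getLast (by simp)) c →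
      ∀ x ∈ a :: l, ∃ y, R x y ∧ (y ∈ a :: l ∨ y = c) := by
  intro l
  induction l with
  | nil =>
    intro a c _ hlast x hx
    simp at hx; subst hx
    exact ⟨c, hlast, Or.inr rfl⟩
  | cons b l ih =>
    intro a c hchain hlast x hx
    simp only [List.Chain, List.chain_cons] at hchain
    obtain ⟨hab, hchain⟩ := hchain
    rw [List.getLast_cons (by simp)] at hlast
    rcases List.mem_cons.mp hx with rfl | hx
    · exact ⟨b, hab, Or.inl (by simp)⟩
    · obtain ⟨y, hy, hmem⟩ := ih b c hchain hlast x hx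
      exact ⟨y, hy, hmem.imp (fun h => List.mem_cons_of_mem _ h) id⟩

lemma aux_pred (R : ε → ε → Prop) :
    ∀ (l : List ε) (a c : ε), List.Chain R a l → R c a →
      ∀ x ∈ a :: l, ∃ y, R y x ∧ (y ∈ a :: l ∨ y = c) := by
  intro l
  induction l with
  | nil =>
    intro a c _ hca x hx
    simp at hx; subst hx
    exact ⟨c, hca, Or.inr rfl⟩
  | cons b l ih =>
    intro a c hchain hca x hx
    simp only [List.Chain, List.chain_cons] at hchain
    obtain ⟨hab, hchain⟩ := hchain
    rcases List.mem_cons.mp hx with rfl | hx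
    · exact ⟨c, hca, Or.inr rfl⟩
    · obtain ⟨y, hy, hmem⟩ := ih b a hchain hab x hx
      rcases hmem with hmem | rfl
      · exact ⟨y, hy, Or.inl (List.mem_cons_of_mem _ hmem)⟩
      · exact ⟨y, hy, Or.inl (by simp)⟩

lemma aux_rel_last (R : ε → ε → Prop) (htrans : ∀ {x y z}, R x y → R y z → R x z) :
    ∀ (l : List ε) (a : ε) (h : l ≠ []), List.Chain R a l → R a (l.getLast h) := by
  intro l
  induction l with
  | nil => intro a h; exact absurd rfl h
  | cons b l ih =>
    intro a _ hchain
    simp only [List.Chain, List.chain_cons] at hchain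
    obtain ⟨hab, hchain⟩ := hchain
    rcases eq_or_ne l [] with rfl | hne
    · simpa using hab
    · rw [List.getLast_cons hne]
      exact htrans hab (ih b hne hchain)

lemma aux_chain_imp_mem {R S : ε → ε → Prop} :
    ∀ (l : List ε) (a : ε), List.Chain R a l →
      (∀ x ∈ a :: l, ∀ y ∈ a :: l, R x y → S x y) → List.Chain S a l := by
  intro l
  induction l with
  | nil => intro a _ _; exact List.Chain.nil
  | cons b l ih =>
    intro a hchain himp
    simp only [List.Chain, List.chain_cons] at hchain
    exact List.Chain.cons (himp a (by simp) b (by simp) hchain.1)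
      (ih b hchain.2 fun x hx y hy h =>
        himp x (List.mem_cons_of_mem _ hx) y (List.mem_cons_of_mem _ hy) h)

lemma aux_transGen_chain (R : ε → ε → Prop) {a b : ε} (h : Relation.TransGen R a b) :
    ∃ l : List ε, List.Chain R a l ∧ R ((a :: l).getLast (by simp)) b := by
  induction h using Relation.TransGen.head_induction_on with
  | single h => exact ⟨[], List.Chain.nil, h⟩
  | head hac _ ih =>
    obtain ⟨l, hch, hlst⟩ := ih
    refine ⟨_ :: l, List.Chain.cons hac hch, ?_⟩
    rwa [List.getLast_cons (by simp)]

end aux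


/-- Edge `f` half-extends edge `e`: the tail of `f` equals the head of `e`
and `arr(e) + α_{head e} ≤ dep(f)`. -/
def HalfExtends {V ε : Type*} (tl hd : ε → V) (dep lam : ε → ℝ) (α : V → ℝ)
    (e f : ε) : Prop :=
  tl f = hd e ∧ dep e + lam e + α (hd e) ≤ dep f

/-- `q :: rest` is a zero-cycle: a nonempty cyclic walk all of whose edges have the same
departure time and zero travel time, and whose tails have zero minimum waiting time. -/
def IsZeroCycle {V ε : Type*} (tl hd : ε → V) (dep lam : ε → ℝ) (α : V → ℝ)
    (q : ε) (rest : List ε) : Prop :=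
  (∀ e ∈ q :: rest, lam e = 0 ∧ α (tl e) = 0 ∧ dep e = dep q) ∧
  List.Chain' (fun e f => hd e = tl f) (q :: rest) ∧
  hd ((q :: rest).getLast (by simp)) = tl q

/-- A temporal graph (with nonnegative travel times and minimum waiting times)
is zero-acyclic if and only if there exists a half-extend-respecting linear ordering
of its temporal edges. -/
theorem zeroAcyclic_iff_halfExtendRespecting_order
    {V ε : Type*} [Fintype ε] (tl hd : ε → V) (dep lam : ε → ℝ) (α : V → ℝ)
    (hlam : ∀ e, 0 ≤ lam e) (hα : ∀ v, 0 ≤ α v) :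
    (¬ ∃ q rest, IsZeroCycle tl hd dep lam α q rest) ↔
    ∃ r : ε → ε → Prop, IsStrictTotalOrder ε r ∧
      ∀ e f, HalfExtends tl hd dep lam α e f → r e f := by
  set H := HalfExtends tl hd dep lam α with hH
  have Hdep : ∀ {x y}, H x y → dep x ≤ dep y := by
    intro x y hxy
    have := hxy.2
    have := hlam x; have := hα (hd x)
    linarith
  constructor
  · intro hnc
    -- no TransGen self loop
    have hirr : ∀ e, ¬ Relation.TransGen H e e := by
      intro e htc
      obtain ⟨l, hch, hlst⟩ := aux_transGen_chain H htc
      -- all departure times equal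
      have hdch : List.Chain (fun x y => dep x ≤ dep y) e l :=
        List.Chain.imp (fun x y h => Hdep h) hch
      have halleq : ∀ x ∈ e :: l, dep x = dep e :=
        aux_all_eq dep l e hdch (Hdep hlst)
      have key : ∀ x y, H x y → dep x = dep e → dep y = dep e →
          lam x = 0 ∧ α (hd x) = 0 := by
        intro x y hxy hx hy
        have h2 := hxy.2
        have := hlam x; have := hα (hd x)
        constructor <;> linarith
      apply hnc
      refine ⟨e, l, ?_, ?_, ?_⟩
      · intro x hx
        have hdx := halleq x hx
        obtain ⟨y, hxy, hmem⟩ := aux_succ H l e e hch hlst x hx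
        have hdy : dep y = dep e := by
          rcases hmem with hmem | rfl
          · exact halleq y hmem
          · rfl
        obtain ⟨hl0, _⟩ := key x y hxy hdx hdy
        obtain ⟨z, hzx, hmemz⟩ := aux_pred H l e ((e :: l).getLast (by simp)) hch hlst x hx
        have hz : z ∈ e :: l := by
          rcases hmemz with hmemz | rfl
          · exact hmemz
          · exact List.getLast_mem _
        have hdz : dep z = dep e := halleq z hz
        obtain ⟨_, hαz⟩ := key z x hzx hdz hdx
        refine ⟨hl0, ?_, hdx⟩
        rw [hzx.1]; exact hαz
      · exact List.Chain.imp (fun x y h => h.1.symm) hch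
      · exact hlst.1.symm
    -- partial order from refl-trans closure, extend
    haveI : IsPartialOrder ε (Relation.ReflTransGen H) := by
      refine { antisymm := ?_ }
      intro a b hab hba
      rcases (Relation.reflTransGen_iff_eq_or_transGen.mp hab) with rfl | hab'
      · rfl
      rcases (Relation.reflTransGen_iff_eq_or_transGen.mp hba) with rfl | hba'
      · rfl
      exact absurd (hab'.trans hba') (hirr a)
    obtain ⟨s, hlin, hsub⟩ := extend_partialOrder (Relation.ReflTransGen H)
    haveI := hlin
    refine ⟨fun a b => s a b ∧ a ≠ b, ?_, ?_⟩
    · refine { trichotomous := ?_, irrefl := ?_, trans := ?_ }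
      · intro a b hab hba
        rcases eq_or_ne a b with rfl | hne
        · rfl
        rcases total_of s a b with h | h
        · exact absurd ⟨h, hne⟩ hab
        · exact absurd ⟨h, hne.symm⟩ hba
      · intro a h; exact h.2 rfl
      · rintro a b c ⟨hab, hne1⟩ ⟨hbc, hne2⟩
        refine ⟨trans_of s hab hbc, ?_⟩
        rintro rfl
        exact hne1 (antisymm_of s hab hbc)
    · intro e f hef
      refine ⟨hsub _ _ (Relation.ReflTransGen.single hef), ?_⟩
      rintro rfl
      apply hnc
      have h2 := hef.2
      have h3 := hlam e; have h4 := hα (hd e)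
      have hl0 : lam e = 0 := by linarith
      have ha0 : α (hd e) = 0 := by linarith
      refine ⟨e, [], ?_, ?_, ?_⟩
      · intro x hx; simp at hx; subst hx
        exact ⟨hl0, by rw [hef.1]; exact ha0, rfl⟩
      · exact List.IsChain.singleton _
      · simpa using hef.1.symm
  · rintro ⟨r, hsto, hresp⟩ ⟨q, rest, hall, hch, hlast⟩
    haveI := hsto
    have hch' : List.Chain (fun e f => hd e = tl f) q rest := hch
    have hHstep : ∀ x ∈ q :: rest, ∀ y ∈ q :: rest, hd x = tl y → H x y := by
      intro x hx y hy hxy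
      obtain ⟨hlx, hax, hdx⟩ := hall x hx
      obtain ⟨hly, hay, hdy⟩ := hall y hy
      refine ⟨hxy.symm, ?_⟩
      rw [← hxy, hlx, hax] at *
      rw [hdx, hdy, hlx]
      rw [← hxy] at hay
      linarith [hay]
    have hchH : List.Chain H q rest :=
      aux_chain_imp_mem rest q hch' hHstep
    have hlastH : H ((q :: rest).getLast (by simp)) q :=
      hHstep _ (List.getLast_mem _) q (by simp) hlast
    have hchr : List.Chain r q rest := List.Chain.imp (fun x y h => hresp x y h) hchH
    rcases eq_or_ne rest [] with rfl | hne
    · simp at hlastH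
      exact irrefl_of r q (hresp _ _ hlastH)
    · have h1 : r q (rest.getLast hne) :=
        aux_rel_last r (fun hxy hyz => trans_of r hxy hyz) rest q hne hchr
      have h2 : r (rest.getLast hne) q := by
        have : (q :: rest).getLast (by simp) = rest.getLast hne := List.getLast_cons hne
        rw [this] at hlastH
        exact hresp _ _ hlastH
      exact irrefl_of r q (trans_of r h1 h2)
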